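/- Let A be an invertible real n×n matrix, B a real m×n matrix, and M the (n+m)×n matrix formed by stacking A on top of B. Suppose ΔQ_B ∈ ℝ^{n+m} satisfies ΔQ_B = M·U for some U ∈ ℝⁿ, and write ΔQ_B in blocks as (Y, E) with Y ∈ ℝⁿ and E ∈ ℝᵐ. Then U = A⁻¹·Y and E = (B·A⁻¹)·Y; that is, the hetero-functional-graph-theoretic state change reproduces exactly the process-based life cycle analysis result E = B·A⁻¹·Y. -/

import Mathlib

/-- If `A` is invertible, `M = [A; B]`, and
`ΔQ_B = M · U` with blocks `Y` (upper) and `E` (lower), then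
`U = A⁻¹ · Y` and `E = (B · A⁻¹) · Y`. -/
theorem hfgt_reproduces_lca (n m : ℕ)
    (A : Matrix (Fin n) (Fin n) ℝ) (B : Matrix (Fin m) (Fin n) ℝ)
    (hA : IsUnit A.det)
    (ΔQB : Fin n ⊕ Fin m → ℝ) (U : Fin n → ℝ)
    (h : ΔQB = (Matrix.fromRows A B).mulVec U)
    (Y : Fin n → ℝ) (E : Fin m → ℝ)
    (hY : Y = ΔQB ∘ Sum.inl) (hE : E = ΔQB ∘ Sum.inr) :
    U = A⁻¹.mulVec Y ∧ E = (B * A⁻¹).mulVec Y := by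
  have hYA : Y = A.mulVec U := by
    subst h hY
    ext i
    simp [Matrix.fromRows, Matrix.mulVec]
    rfl
  have hU : U = A⁻¹.mulVec Y := by
    rw [hYA, Matrix.mulVec_mulVec, Matrix.nonsing_inv_mul A hA, Matrix.one_mulVec]
  refine ⟨hU, ?_⟩
  subst h hE
  ext i
  have h2 : (Matrix.fromRows A B).mulVec U (Sum.inr i) = B.mulVec U i := by
    simp [Matrix.fromRows, Matrix.mulVec]
    rfl
  rw [Function.comp_apply, h2, hU, Matrix.mulVec_mulVec]
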